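/- Let p be a prime and let f, g ∈ ℤ[x] have canonical representations f = Σ_m f_m·(x^p−x)^m and g = Σ_m g_m·(x^p−x)^m with deg f_m < p and deg g_m < p for all m. Then [f]_p = [g]_p and [f′]_p = [g′]_p (where f′, g′ denote the formal derivatives) if and only if f_0 ≡ g_0 (mod pℤ[x]) and f_1 ≡ g_1 (mod pℤ[x]). -/

import Mathlib

open Polynomial

variable {p : ℕ}

lemma zero_fun_of_dvd (p : ℕ) (h : Polynomial ℤ)
    (hc : ∀ i, (p : ℤ) ∣ h.coeff i) (x : ZMod p) : aeval x h = 0 := by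
  rw [aeval_def, ← eval_map]
  have : h.map (algebraMap ℤ (ZMod p)) = 0 := by
    ext i
    simp [coeff_map, ZMod.intCast_zmod_eq_zero_iff_dvd, hc i]
  rw [this, eval_zero]

lemma dvd_of_zero_fun (hp : p.Prime) (h : Polynomial ℤ)
    (hdeg : h.degree < (p : WithBot ℕ))
    (hz : ∀ x : ZMod p, aeval x h = 0) (i : ℕ) : (p : ℤ) ∣ h.coeff i := by
  haveI : Fact p.Prime := ⟨hp⟩
  have hm : h.map (algebraMap ℤ (ZMod p)) = 0 := by
    by_cases h0 : h = 0
    · simp [h0]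
    apply Polynomial.eq_zero_of_natDegree_lt_card_of_eval_eq_zero _ Function.injective_id
    · intro x
      have := hz x
      rwa [aeval_def, ← eval_map] at this
    · rw [ZMod.card]
      calc (h.map (algebraMap ℤ (ZMod p))).natDegree ≤ h.natDegree :=
            natDegree_map_le
        _ < p := (natDegree_lt_iff_degree_lt h0).mpr (by simpa using hdeg)
  have := congrArg (fun q => Polynomial.coeff q i) hm
  simpa [coeff_map, ZMod.intCast_zmod_eq_zero_iff_dvd] using this

lemma aeval_t (hp : p.Prime) (x : ZMod p) :
    aeval x ((X : Polynomial ℤ) ^ p - X) = 0 := by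
  haveI : Fact p.Prime := ⟨hp⟩
  simp [ZMod.pow_card]

lemma aeval_dt (hp : p.Prime) (x : ZMod p) :
    aeval x (derivative ((X : Polynomial ℤ) ^ p - X)) = -1 := by
  haveI : Fact p.Prime := ⟨hp⟩
  simp [derivative_X_pow, ZMod.natCast_self]

lemma aeval_sum_eq (hp : p.Prime) (N : ℕ) (H : ℕ → Polynomial ℤ) (x : ZMod p) :
    aeval x (∑ m ∈ Finset.range (N + 1), H m * ((X : Polynomial ℤ) ^ p - X) ^ m)
      = aeval x (H 0) := by
  rw [map_sum, Finset.sum_eq_single 0]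
  · simp
  · intro m _ hm
    obtain ⟨k, rfl⟩ := Nat.exists_eq_succ_of_ne_zero hm
    simp [aeval_t hp, pow_succ]
  · simp

lemma aeval_deriv_sum_eq (hp : p.Prime) (N : ℕ) (H : ℕ → Polynomial ℤ) (x : ZMod p) :
    aeval x (derivative (∑ m ∈ Finset.range (N + 2),
        H m * ((X : Polynomial ℤ) ^ p - X) ^ m))
      = aeval x (derivative (H 0)) - aeval x (H 1) := by
  rw [derivative_sum, map_sum, Finset.sum_range_succ', Finset.sum_range_succ']
  have h2 : ∀ i : ℕ,
      aeval x (derivative (H (i + 1 + 1) * ((X : Polynomial ℤ) ^ p - X) ^ (i + 1 + 1))) = 0 := by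
    intro i
    simp [derivative_mul, derivative_pow, aeval_t hp, pow_succ]
  simp only [h2, Finset.sum_const_zero, zero_add]
  simp [derivative_mul, derivative_pow, aeval_t hp, aeval_dt hp]
  ring
/-- Let `f = Σ_m F_m (x^p - x)^m`, `g = Σ_m G_m (x^p - x)^m` be canonical
representations (all `F_m, G_m` of degree `< p`).  Then `[f]_p = [g]_p` and
`[f']_p = [g']_p` if and only if `F_0 ≡ G_0 (mod pℤ[x])` and
`F_1 ≡ G_1 (mod pℤ[x])`. -/
theorem eq_mod_p_and_deriv_iff_canonical_congruences (p : ℕ) (hp : p.Prime)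
    (M : ℕ) (F G : ℕ → Polynomial ℤ)
    (hFdeg : ∀ m, (F m).degree < (p : WithBot ℕ))
    (hGdeg : ∀ m, (G m).degree < (p : WithBot ℕ))
    (hF0 : ∀ m, M ≤ m → F m = 0) (hG0 : ∀ m, M ≤ m → G m = 0)
    (f g : Polynomial ℤ)
    (hf : f = ∑ m ∈ Finset.range M, F m * (Polynomial.X ^ p - Polynomial.X) ^ m)
    (hg : g = ∑ m ∈ Finset.range M, G m * (Polynomial.X ^ p - Polynomial.X) ^ m) :
    (((fun x : ZMod p => Polynomial.aeval x f) =
        fun x : ZMod p => Polynomial.aeval x g) ∧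
     ((fun x : ZMod p => Polynomial.aeval x (Polynomial.derivative f)) =
        fun x : ZMod p => Polynomial.aeval x (Polynomial.derivative g))) ↔
      ((∀ i : ℕ, (p : ℤ) ∣ (F 0 - G 0).coeff i) ∧
       (∀ i : ℕ, (p : ℤ) ∣ (F 1 - G 1).coeff i)) := by
  -- extend the sums to `range (M + 2)`
  have hext : ∀ H : ℕ → Polynomial ℤ, (∀ m, M ≤ m → H m = 0) →
      (∑ m ∈ Finset.range M, H m * ((X : Polynomial ℤ) ^ p - X) ^ m)
        = ∑ m ∈ Finset.range (M + 2), H m * ((X : Polynomial ℤ) ^ p - X) ^ m := by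
    intro H hH
    apply Finset.sum_subset (Finset.range_subset_range.mpr (by omega))
    intro m _ hm
    rw [hH m (by simpa using hm)]
    simp
  rw [hext F hF0] at hf
  rw [hext G hG0] at hg
  have ef : ∀ x : ZMod p, aeval x f = aeval x (F 0) := by
    intro x; rw [hf]; exact aeval_sum_eq hp (M + 1) F x
  have eg : ∀ x : ZMod p, aeval x g = aeval x (G 0) := by
    intro x; rw [hg]; exact aeval_sum_eq hp (M + 1) G x
  have edf : ∀ x : ZMod p,
      aeval x (derivative f) = aeval x (derivative (F 0)) - aeval x (F 1) := by
    intro x; rw [hf]; exact aeval_deriv_sum_eq hp M F x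
  have edg : ∀ x : ZMod p,
      aeval x (derivative g) = aeval x (derivative (G 0)) - aeval x (G 1) := by
    intro x; rw [hg]; exact aeval_deriv_sum_eq hp M G x
  constructor
  · rintro ⟨h1, h2⟩
    have hz0 : ∀ x : ZMod p, aeval x (F 0 - G 0) = 0 := by
      intro x
      have := congrFun h1 x
      rw [ef x, eg x] at this
      simp [map_sub, this]
    have dvd0 : ∀ i : ℕ, (p : ℤ) ∣ (F 0 - G 0).coeff i :=
      dvd_of_zero_fun hp _ (lt_of_le_of_lt (degree_sub_le _ _)
        (max_lt (hFdeg 0) (hGdeg 0))) hz0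
    have dvdd : ∀ i : ℕ, (p : ℤ) ∣ (derivative (F 0 - G 0)).coeff i := by
      intro i
      rw [coeff_derivative]
      exact (dvd0 (i + 1)).mul_right _
    have hzd : ∀ x : ZMod p, aeval x (derivative (F 0)) = aeval x (derivative (G 0)) := by
      intro x
      have := zero_fun_of_dvd p _ dvdd x
      rw [derivative_sub, map_sub, sub_eq_zero] at this
      exact this
    have hz1 : ∀ x : ZMod p, aeval x (F 1 - G 1) = 0 := by
      intro x
      have := congrFun h2 x
      rw [edf x, edg x, hzd x] at this
      rw [map_sub, sub_eq_zero]
      linear_combination -this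
    exact ⟨dvd0, dvd_of_zero_fun hp _ (lt_of_le_of_lt (degree_sub_le _ _)
      (max_lt (hFdeg 1) (hGdeg 1))) hz1⟩
  · rintro ⟨d0, d1⟩
    have hz0 : ∀ x : ZMod p, aeval x (F 0) = aeval x (G 0) := by
      intro x
      have := zero_fun_of_dvd p _ d0 x
      rwa [map_sub, sub_eq_zero] at this
    have dvdd : ∀ i : ℕ, (p : ℤ) ∣ (derivative (F 0 - G 0)).coeff i := by
      intro i
      rw [coeff_derivative]
      exact (d0 (i + 1)).mul_right _
    have hzd : ∀ x : ZMod p, aeval x (derivative (F 0)) = aeval x (derivative (G 0)) := by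
      intro x
      have := zero_fun_of_dvd p _ dvdd x
      rwa [derivative_sub, map_sub, sub_eq_zero] at this
    have hz1 : ∀ x : ZMod p, aeval x (F 1) = aeval x (G 1) := by
      intro x
      have := zero_fun_of_dvd p _ d1 x
      rwa [map_sub, sub_eq_zero] at this
    constructor
    · funext x; rw [ef x, eg x, hz0 x]
    · funext x; rw [edf x, edg x, hzd x, hz1 x]
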